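/- Let G = ([d],E) be a perfect CIS graph, i.e., every inclusion-maximal clique intersects every inclusion-maximal stable set. Then P := conv{1_S : S maximal stable set} and Q := conv{1_C : C maximal clique} form a Gale-dual pair: P = {x ∈ ℝ^d_{≥0} : ⟨x, v⟩ = 1 for every vertex v of Q} and Q = {x ∈ ℝ^d_{≥0} : ⟨x, v⟩ = 1 for every vertex v of P}. -/

import Mathlib

open Finset

/-- Dot product on `ℝ^d`. -/
def dot {d : ℕ} (x y : Fin d → ℝ) : ℝ := ∑ i, x i * y i

/-- Coordinatewise absolute value. -/
def absVec {d : ℕ} (p : Fin d → ℝ) : Fin d → ℝ := fun i => |p i|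

/-- A vector of signs `±1`. -/
def IsSignVec {d : ℕ} (σ : Fin d → ℝ) : Prop := ∀ i, σ i = 1 ∨ σ i = -1

/-- Coordinatewise sign flip. -/
def sflip {d : ℕ} (σ p : Fin d → ℝ) : Fin d → ℝ := fun i => σ i * p i

/-- A set is unconditional if it is closed under coordinate sign flips. -/
def Unconditional {d : ℕ} (K : Set (Fin d → ℝ)) : Prop :=
  ∀ σ : Fin d → ℝ, IsSignVec σ → ∀ p ∈ K, sflip σ p ∈ K

/-- A (nonempty) polytope: the convex hull of a nonempty finite set. -/
def IsPolytope {d : ℕ} (P : Set (Fin d → ℝ)) : Prop :=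
  ∃ V : Finset (Fin d → ℝ), V.Nonempty ∧ P = convexHull ℝ (V : Set (Fin d → ℝ))

/-- The nonnegative orthant of `ℝ^d`. -/
def nonnegOrthant (d : ℕ) : Set (Fin d → ℝ) := {x | ∀ i, 0 ≤ x i}

/-- An anti-blocking polytope: a polytope in the nonnegative orthant that is
down-closed with respect to the componentwise order. -/
def IsAntiBlocking {d : ℕ} (P : Set (Fin d → ℝ)) : Prop :=
  IsPolytope P ∧ P ⊆ nonnegOrthant d ∧
    ∀ q ∈ P, ∀ p : Fin d → ℝ, (∀ i, 0 ≤ p i ∧ p i ≤ q i) → p ∈ P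

/-- The unconditional set associated to a set `P`: all points whose vector of
absolute values lies in `P`. -/
def UPoly {d : ℕ} (P : Set (Fin d → ℝ)) : Set (Fin d → ℝ) := {p | absVec p ∈ P}

/-- Cast an integer vector to a real vector. -/
def intCast {d : ℕ} (a : Fin d → ℤ) : Fin d → ℝ := fun i => (a i : ℝ)

/-- A lattice polytope: convex hull of a nonempty finite set of integer points. -/
def IsLatticePolytope {d : ℕ} (P : Set (Fin d → ℝ)) : Prop :=
  ∃ V : Finset (Fin d → ℤ), V.Nonempty ∧ P = convexHull ℝ (intCast '' (V : Set (Fin d → ℤ)))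

/-- Reflexive polytope: `0` is interior and `P` is cut out by integral
inequalities with right-hand side `1`. -/
def IsReflexive {d : ℕ} (P : Set (Fin d → ℝ)) : Prop :=
  0 ∈ interior P ∧
    ∃ A : Finset (Fin d → ℤ), P = {x | ∀ a ∈ A, dot (intCast a) x ≤ 1}

/-- Indicator vector of a subset of `[d]`. -/
def indVec {d : ℕ} (s : Finset (Fin d)) : Fin d → ℝ := fun i => if i ∈ s then 1 else 0

/-- A stable (independent) set of a graph. -/
def IsStableSet {d : ℕ} (G : SimpleGraph (Fin d)) (s : Finset (Fin d)) : Prop :=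
  ∀ i ∈ s, ∀ j ∈ s, ¬ G.Adj i j

/-- The stable set polytope: convex hull of indicator vectors of stable sets. -/
def stableSetPolytope {d : ℕ} (G : SimpleGraph (Fin d)) : Set (Fin d → ℝ) :=
  convexHull ℝ {x | ∃ s : Finset (Fin d), IsStableSet G s ∧ x = indVec s}

/-- The clique number of a graph, as an extended natural number. -/
noncomputable def cliqueNumber {V : Type*} (G : SimpleGraph V) : ℕ∞ :=
  sSup {n : ℕ∞ | ∃ (m : ℕ) (t : Finset V), n = (m : ℕ∞) ∧ G.IsNClique m t}

/-- A graph is perfect if every induced subgraph has clique number equal to its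
chromatic number. -/
def IsPerfect {d : ℕ} (G : SimpleGraph (Fin d)) : Prop :=
  ∀ s : Set (Fin d), cliqueNumber (G.induce s) = (G.induce s).chromaticNumber

/-- An inclusion-maximal clique. -/
def IsMaxClique {d : ℕ} (G : SimpleGraph (Fin d)) (C : Finset (Fin d)) : Prop :=
  G.IsClique (C : Set (Fin d)) ∧
    ∀ C' : Finset (Fin d), G.IsClique (C' : Set (Fin d)) → C ⊆ C' → C = C'

/-- An inclusion-maximal stable set. -/
def IsMaxStable {d : ℕ} (G : SimpleGraph (Fin d)) (S : Finset (Fin d)) : Prop :=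
  IsStableSet G S ∧ ∀ S' : Finset (Fin d), IsStableSet G S' → S ⊆ S' → S = S'

section Aux

variable {d : ℕ} {G : SimpleGraph (Fin d)}

lemma stable_subset {s t : Finset (Fin d)} (h : IsStableSet G t) (hsub : s ⊆ t) :
    IsStableSet G s := fun i hi j hj => h i (hsub hi) j (hsub hj)

lemma stable_empty : IsStableSet G (∅ : Finset (Fin d)) := by
  intro i hi; simp at hi

lemma stable_singleton (v : Fin d) : IsStableSet G {v} := by
  intro i hi j hj
  simp only [mem_singleton] at hi hj
  subst hi; subst hj; simp

lemma stable_inter_clique_card {s C : Finset (Fin d)} (hs : IsStableSet G s)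
    (hC : G.IsClique (C : Set (Fin d))) : (s ∩ C).card ≤ 1 := by
  by_contra h
  push_neg at h
  obtain ⟨a, ha, b, hb, hab⟩ := Finset.one_lt_card.mp h
  simp only [mem_inter] at ha hb
  exact hs a ha.1 b hb.1 (hC ha.2 hb.2 hab)

lemma exists_maxClique_superset {C : Finset (Fin d)} (hC : G.IsClique (C : Set (Fin d))) :
    ∃ C', IsMaxClique G C' ∧ C ⊆ C' := by
  classical
  obtain ⟨C', hC', hmax⟩ := Finset.exists_max_image
    (univ.filter fun t : Finset (Fin d) => G.IsClique (t : Set (Fin d)) ∧ C ⊆ t) Finset.card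
    ⟨C, by simp [hC]⟩
  simp only [mem_filter, mem_univ, true_and] at hC' hmax
  refine ⟨C', ⟨hC'.1, fun C'' hC'' hsub => ?_⟩, hC'.2⟩
  exact Finset.eq_of_subset_of_card_le hsub (hmax C'' ⟨hC'', hC'.2.trans hsub⟩)

lemma exists_maxStable_superset {s : Finset (Fin d)} (hs : IsStableSet G s) :
    ∃ s', IsMaxStable G s' ∧ s ⊆ s' := by
  classical
  obtain ⟨s', hs', hmax⟩ := Finset.exists_max_image
    (univ.filter fun t : Finset (Fin d) => IsStableSet G t ∧ s ⊆ t) Finset.card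
    ⟨s, by simp [hs]⟩
  simp only [mem_filter, mem_univ, true_and] at hs' hmax
  refine ⟨s', ⟨hs'.1, fun s'' hs'' hsub => ?_⟩, hs'.2⟩
  exact Finset.eq_of_subset_of_card_le hsub (hmax s'' ⟨hs'', hs'.2.trans hsub⟩)

lemma maxStable_of_meets {T : Finset (Fin d)} (hT : IsStableSet G T)
    (h : ∀ C, IsMaxClique G C → (T ∩ C).Nonempty) : IsMaxStable G T := by
  refine ⟨hT, fun T' hT' hsub => ?_⟩
  by_contra hne
  obtain ⟨v, hvT', hvT⟩ := Finset.exists_of_ssubset (hsub.ssubset_of_ne hne)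
  obtain ⟨C, hC, hvC⟩ := exists_maxClique_superset (show G.IsClique (({v} : Finset (Fin d)) : Set (Fin d)) by simpa using G.isClique_singleton v)
  obtain ⟨u, hu⟩ := h C hC
  simp only [mem_inter] at hu
  have huv : u ≠ v := fun h => hvT (h ▸ hu.1)
  have hadj : G.Adj u v := hC.1 hu.2 (hvC (by simp)) huv
  exact hT' u (hsub hu.1) v hvT' hadj

lemma maxClique_of_meets {C : Finset (Fin d)} (hC : G.IsClique (C : Set (Fin d)))
    (h : ∀ S, IsMaxStable G S → (C ∩ S).Nonempty) : IsMaxClique G C := by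
  refine ⟨hC, fun C' hC' hsub => ?_⟩
  by_contra hne
  obtain ⟨v, hvC', hvC⟩ := Finset.exists_of_ssubset (hsub.ssubset_of_ne hne)
  obtain ⟨S, hS, hvS⟩ := exists_maxStable_superset (stable_singleton (G := G) v)
  obtain ⟨u, hu⟩ := h S hS
  simp only [mem_inter] at hu
  have huv : u ≠ v := fun h => hvC (h ▸ hu.1)
  have hadj : G.Adj u v := hC' (hsub hu.1) hvC' huv
  exact hS.1 u hu.2 v (hvS (by simp)) hadj

open Classical in
/-- maximum weight of a clique -/
noncomputable def wcl {d : ℕ} (G : SimpleGraph (Fin d)) (k : Fin d → ℕ) : ℕ :=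
  Finset.sup (univ.filter fun C : Finset (Fin d) => G.IsClique (C : Set (Fin d)))
    (fun C => ∑ i ∈ C, k i)

/-- number of sets in the family containing i -/
def covCount {d n : ℕ} (S : Fin n → Finset (Fin d)) (i : Fin d) : ℕ :=
  ∑ j, if i ∈ S j then 1 else 0

variable {d : ℕ} {G : SimpleGraph (Fin d)}

lemma le_wcl {k : Fin d → ℕ} {C : Finset (Fin d)} (hC : G.IsClique (C : Set (Fin d))) :
    ∑ i ∈ C, k i ≤ wcl G k := by
  classical
  apply Finset.le_sup (f := fun C => ∑ i ∈ C, k i)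
  simp [hC]

lemma wcl_le {k : Fin d → ℕ} {m : ℕ}
    (h : ∀ C : Finset (Fin d), G.IsClique (C : Set (Fin d)) → ∑ i ∈ C, k i ≤ m) :
    wcl G k ≤ m := by
  classical
  apply Finset.sup_le
  intro C hC
  simp only [mem_filter, mem_univ, true_and] at hC
  exact h C hC

lemma wcl_mono {k k' : Fin d → ℕ} (h : ∀ i, k i ≤ k' i) : wcl G k ≤ wcl G k' :=
  wcl_le fun C hC => le_trans (Finset.sum_le_sum fun i _ => h i) (le_wcl hC)

lemma single_le_wcl (k : Fin d → ℕ) (v : Fin d) : k v ≤ wcl G k := by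
  have h := le_wcl (G := G) (k := k)
    (show G.IsClique (({v} : Finset (Fin d)) : Set (Fin d)) by
      simp [SimpleGraph.isClique_singleton])
  simpa using h

/-- Perfection oracle: induced subgraphs can be covered by few stable sets. -/
lemma perf_oracle (hG : IsPerfect G) (A : Finset (Fin d)) :
    ∃ n, n ≤ wcl G (fun i => if i ∈ A then 1 else 0) ∧
      ∃ S : Fin n → Finset (Fin d), (∀ j, IsStableSet G (S j)) ∧
        ∀ i ∈ A, 1 ≤ covCount S i := by
  classical
  set s : Set (Fin d) := (A : Set (Fin d)) with hs
  set H := G.induce s with hH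
  -- the clique number of H as a natural number
  set cliques : Finset (Finset s) := univ.filter (fun t : Finset s => H.IsClique (t : Set s))
    with hcliques
  have hne : cliques.Nonempty := ⟨∅, by simp [hcliques, SimpleGraph.isClique_empty]⟩
  set n := cliques.sup Finset.card with hn
  obtain ⟨t0, ht0mem, ht0⟩ := Finset.exists_mem_eq_sup cliques hne Finset.card
  simp only [hcliques, mem_filter, mem_univ, true_and] at ht0mem
  -- cliqueNumber H = n
  have hcn : cliqueNumber H = (n : ℕ∞) := by
    apply le_antisymm
    · apply sSup_le
      rintro x ⟨m, t, rfl, ht⟩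
      have : t.card ≤ n := by
        apply Finset.le_sup (f := Finset.card)
        simp [hcliques, ht.1]
      exact_mod_cast ht.2 ▸ Nat.cast_le.mpr this
    · apply le_sSup
      exact ⟨n, t0, rfl, ht0mem, ht0.symm⟩
  have hcol : H.Colorable n := by
    rw [← SimpleGraph.chromaticNumber_le_iff_colorable]
    rw [← hG s, hcn]
  obtain ⟨c⟩ := hcol
  -- the stable sets
  refine ⟨n, ?_, fun j => A.filter (fun i => ∃ h : i ∈ s, c ⟨i, h⟩ = j), ?_, ?_⟩
  · -- n ≤ wcl
    rw [hn, ht0]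
    set emb : s ↪ Fin d := ⟨Subtype.val, Subtype.val_injective⟩ with hemb
    have hsub : ∀ i ∈ t0.map emb, i ∈ A := by
      intro i hi
      simp only [Finset.mem_map, hemb, Function.Embedding.coeFn_mk] at hi
      obtain ⟨a, _, rfl⟩ := hi
      exact a.2
    have hclq : G.IsClique ((t0.map emb : Finset (Fin d)) : Set (Fin d)) := by
      intro x hx y hy hxy
      simp only [Finset.coe_map, Set.mem_image, Finset.mem_coe, hemb,
        Function.Embedding.coeFn_mk] at hx hy
      obtain ⟨a, ha, rfl⟩ := hx
      obtain ⟨b, hb, rfl⟩ := hy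
      have hab : a ≠ b := fun h => hxy (by rw [h])
      have := ht0mem (Finset.mem_coe.mpr ha) (Finset.mem_coe.mpr hb) hab
      simpa [hH] using this
    calc #t0 = ∑ i ∈ t0.map emb, (fun i => if i ∈ A then (1:ℕ) else 0) i := by
          rw [Finset.sum_congr rfl (fun i hi => if_pos (hsub i hi))]
          simp
      _ ≤ wcl G (fun i => if i ∈ A then 1 else 0) := le_wcl hclq
  · -- stability
    intro j a ha b hb hadj
    simp only [mem_filter] at ha hb
    obtain ⟨hsa, hca⟩ := ha.2
    obtain ⟨hsb, hcb⟩ := hb.2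
    have hadjH : H.Adj ⟨a, hsa⟩ ⟨b, hsb⟩ := by simpa [hH] using hadj
    have := c.valid hadjH
    rw [hca, hcb] at this
    exact this rfl
  · -- coverage
    intro a ha
    have hsa : a ∈ s := ha
    have hmem : a ∈ A.filter (fun i => ∃ h : i ∈ s, c ⟨i, h⟩ = c ⟨a, hsa⟩) :=
      mem_filter.mpr ⟨ha, hsa, rfl⟩
    unfold covCount
    calc (1:ℕ) = if a ∈ A.filter (fun i => ∃ h : i ∈ s, c ⟨i, h⟩ = c ⟨a, hsa⟩)
          then 1 else 0 := by rw [if_pos hmem]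
      _ ≤ _ := Finset.single_le_sum (f := fun j => if a ∈ A.filter
            (fun i => ∃ h : i ∈ s, c ⟨i, h⟩ = j) then (1:ℕ) else 0)
            (fun j _ => by positivity) (mem_univ (c ⟨a, hsa⟩))
lemma covCount_snoc {n : ℕ} (S : Fin n → Finset (Fin d)) (T : Finset (Fin d)) (i : Fin d) :
    covCount (Fin.snoc S T) i = covCount S i + (if i ∈ T then 1 else 0) := by
  unfold covCount
  rw [Fin.sum_univ_castSucc]
  simp

lemma one_le_covCount {n : ℕ} {S : Fin n → Finset (Fin d)} {i : Fin d} (j : Fin n)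
    (h : i ∈ S j) : 1 ≤ covCount S i := by
  unfold covCount
  calc (1:ℕ) = if i ∈ S j then 1 else 0 := by rw [if_pos h]
    _ ≤ _ := Finset.single_le_sum (f := fun j' => if i ∈ S j' then (1:ℕ) else 0)
        (fun j' _ => Nat.zero_le _) (mem_univ j)

lemma exists_mem_of_covCount_pos {n : ℕ} {S : Fin n → Finset (Fin d)} {i : Fin d}
    (h : 1 ≤ covCount S i) : ∃ j, i ∈ S j := by
  by_contra h'
  push_neg at h'
  unfold covCount at h
  simp [h'] at h

lemma clique_ind_sum_le_one {C s : Finset (Fin d)} (hs : IsStableSet G s)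
    (hC : G.IsClique (C : Set (Fin d))) :
    ∑ i ∈ C, (if i ∈ s then (1:ℕ) else 0) ≤ 1 := by
  classical
  calc ∑ i ∈ C, (if i ∈ s then (1:ℕ) else 0) = (C.filter (· ∈ s)).card :=
        (Finset.card_filter _ _).symm
    _ = (s ∩ C).card := by rw [Finset.filter_mem_eq_inter, Finset.inter_comm]
    _ ≤ 1 := stable_inter_clique_card hs hC

lemma sum_covCount_clique {n : ℕ} {S : Fin n → Finset (Fin d)}
    (hS : ∀ j, IsStableSet G (S j)) {C : Finset (Fin d)}
    (hC : G.IsClique (C : Set (Fin d))) :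
    ∑ i ∈ C, covCount S i ≤ n := by
  unfold covCount
  rw [Finset.sum_comm]
  calc ∑ j : Fin n, ∑ i ∈ C, (if i ∈ S j then (1:ℕ) else 0)
      ≤ ∑ _j : Fin n, 1 :=
        Finset.sum_le_sum (fun j _ => clique_ind_sum_le_one (hS j) hC)
    _ = n := by simp

theorem weighted_coloring (hG : IsPerfect G) (k : Fin d → ℕ) :
    ∃ n, n ≤ wcl G k ∧ ∃ S : Fin n → Finset (Fin d),
      (∀ j, IsStableSet G (S j)) ∧ ∀ i, k i ≤ covCount S i := by
  classical
  obtain ⟨m, hm⟩ : ∃ m, ∑ i, (k i - 1) ≤ m := ⟨_, le_refl _⟩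
  induction m generalizing k with
  | zero =>
    have hk1 : ∀ i, k i ≤ 1 := by
      intro i
      have h1 : k i - 1 ≤ ∑ i, (k i - 1) :=
        Finset.single_le_sum (f := fun i => k i - 1) (fun i _ => Nat.zero_le _) (mem_univ i)
      omega
    set A := univ.filter (fun i => k i = 1) with hA
    have hkA : (fun i => if i ∈ A then 1 else 0) = k := by
      funext i
      have := hk1 i
      by_cases h : k i = 1 <;> simp [hA, h] <;> omega
    obtain ⟨n, hn, S, hSstable, hScov⟩ := perf_oracle hG A
    rw [hkA] at hn
    refine ⟨n, hn, S, hSstable, fun i => ?_⟩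
    by_cases h : k i = 1
    · exact h ▸ hScov i (by simp [hA, h])
    · have := hk1 i; omega
  | succ m ih =>
    by_cases hsmall : ∀ i, k i ≤ 1
    · apply ih
      have : ∑ i, (k i - 1) = 0 :=
        Finset.sum_eq_zero (fun i _ => by have := hsmall i; omega)
      omega
    push_neg at hsmall
    obtain ⟨v, hv⟩ := hsmall
    set k' := Function.update k v (k v - 1) with hk'
    have hk'v : k' v = k v - 1 := Function.update_self ..
    have hk'ne : ∀ i, i ≠ v → k' i = k i := fun i hi => Function.update_of_ne hi ..
    have hmono : ∀ i, k' i ≤ k i := by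
      intro i
      by_cases h : i = v
      · subst h; omega
      · rw [hk'ne i h]
    have hsum : ∑ i, (k' i - 1) ≤ m := by
      have e1 : (k' v - 1) + ∑ i ∈ univ.erase v, (k' i - 1) = ∑ i, (k' i - 1) :=
        Finset.add_sum_erase _ (fun i => k' i - 1) (mem_univ v)
      have e2 : (k v - 1) + ∑ i ∈ univ.erase v, (k i - 1) = ∑ i, (k i - 1) :=
        Finset.add_sum_erase _ (fun i => k i - 1) (mem_univ v)
      have e3 : ∑ i ∈ univ.erase v, (k' i - 1) = ∑ i ∈ univ.erase v, (k i - 1) :=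
        Finset.sum_congr rfl (fun i hi => by rw [hk'ne i (Finset.ne_of_mem_erase hi)])
      omega
    obtain ⟨n', hn', S, hSstable, hScov⟩ := ih k' hsum
    set q' := wcl G k' with hq'def
    have hq'1 : 1 ≤ q' := le_trans (by omega : 1 ≤ k' v) (single_le_wcl k' v)
    have hsplit : ∀ C : Finset (Fin d), v ∈ C → ∑ i ∈ C, k i = (∑ i ∈ C, k' i) + 1 := by
      intro C hvC
      have e1 := Finset.add_sum_erase _ k hvC
      have e2 := Finset.add_sum_erase _ k' hvC
      have e3 : ∑ i ∈ C.erase v, k i = ∑ i ∈ C.erase v, k' i :=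
        Finset.sum_congr rfl (fun i hi => (hk'ne i (Finset.ne_of_mem_erase hi)).symm)
      omega
    have hsplit' : ∀ C : Finset (Fin d), v ∉ C → ∑ i ∈ C, k i = ∑ i ∈ C, k' i :=
      fun C hvC => Finset.sum_congr rfl
        (fun i hi => (hk'ne i (fun h => hvC (h ▸ hi))).symm)
    by_cases hcase : ∃ C : Finset (Fin d),
        G.IsClique (C : Set (Fin d)) ∧ v ∈ C ∧ ∑ i ∈ C, k' i = q'
    · -- v lies in a clique of maximal k'-weight
      obtain ⟨C, hCclq, hvC, hCsum⟩ := hcase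
      have hq : wcl G k = q' + 1 := by
        apply le_antisymm
        · apply wcl_le; intro C' hC'
          have h5 := le_wcl (G := G) (k := k') hC'
          by_cases h : v ∈ C'
          · rw [hsplit C' h]; omega
          · rw [hsplit' C' h]; omega
        · have h6 := le_wcl (G := G) (k := k) hCclq
          rw [hsplit C hvC, hCsum] at h6; exact h6
      refine ⟨n' + 1, by omega, Fin.snoc S {v}, ?_, ?_⟩
      · intro j
        refine Fin.lastCases ?_ ?_ j
        · rw [Fin.snoc_last]; exact stable_singleton v
        · intro j'; rw [Fin.snoc_castSucc]; exact hSstable j'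
      · intro i
        rw [covCount_snoc]
        by_cases h : i = v
        · have h7 := hScov i
          have e1 : k' i = k i - 1 := by rw [h]; exact hk'v
          have e2 : 1 < k i := by rw [h]; exact hv
          rw [if_pos (by rw [h]; exact Finset.mem_singleton_self v)]
          omega
        · have h7 := hScov i
          rw [hk'ne i h] at h7
          rw [if_neg (fun hh => h (Finset.mem_singleton.mp hh))]
          omega
    · -- no clique through v attains the maximal k'-weight
      push_neg at hcase
      have hcase' : ∀ C : Finset (Fin d), G.IsClique (C : Set (Fin d)) → v ∈ C →
          ∑ i ∈ C, k' i + 1 ≤ q' := by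
        intro C h1 h2
        have h3 := le_wcl (G := G) (k := k') h1
        have h4 := hcase C h1 h2
        omega
      have hq : wcl G k = q' := by
        apply le_antisymm
        · apply wcl_le; intro C' hC'
          by_cases h : v ∈ C'
          · rw [hsplit C' h]; exact hcase' C' hC' h
          · rw [hsplit' C' h]; exact le_wcl hC'
        · exact wcl_mono hmono
      have hv1 : 1 ≤ covCount S v := le_trans (by omega : 1 ≤ k' v) (hScov v)
      obtain ⟨j₀, hj₀⟩ := exists_mem_of_covCount_pos hv1
      set D := (S j₀).erase v with hD
      set k'' := fun i => k' i - (if i ∈ D then 1 else 0) with hk''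
      have hk''le : ∀ i, k'' i ≤ k' i := fun i => Nat.sub_le _ _
      have hq'' : wcl G k'' ≤ q' - 1 := by
        apply wcl_le; intro C hC
        have h6 : ∑ i ∈ C, k'' i ≤ ∑ i ∈ C, k' i :=
          Finset.sum_le_sum (fun i _ => hk''le i)
        by_cases htight : ∑ i ∈ C, k' i = q'
        · have hvC : v ∉ C := fun h => absurd htight (hcase C hC h)
          have hcov_le : ∑ i ∈ C, covCount S i ≤ n' := sum_covCount_clique hSstable hC
          have hklecov : ∑ i ∈ C, k' i ≤ ∑ i ∈ C, covCount S i :=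
            Finset.sum_le_sum (fun i _ => hScov i)
          have hu : ∃ u ∈ C, u ∈ S j₀ := by
            by_contra hno
            push_neg at hno
            have hcc : ∑ i ∈ C, covCount S i ≤ n' - 1 := by
              unfold covCount
              rw [Finset.sum_comm]
              have e1 : (∑ i ∈ C, if i ∈ S j₀ then (1:ℕ) else 0) +
                  ∑ j ∈ univ.erase j₀, (∑ i ∈ C, if i ∈ S j then (1:ℕ) else 0) =
                  ∑ j : Fin n', ∑ i ∈ C, (if i ∈ S j then (1:ℕ) else 0) :=
                Finset.add_sum_erase _ (fun j => ∑ i ∈ C, if i ∈ S j then (1:ℕ) else 0)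
                  (mem_univ j₀)
              have e2 : (∑ i ∈ C, if i ∈ S j₀ then (1:ℕ) else 0) = 0 :=
                Finset.sum_eq_zero (fun i hi => by rw [if_neg (hno i hi)])
              have e3 : ∑ j ∈ univ.erase j₀, (∑ i ∈ C, if i ∈ S j then (1:ℕ) else 0) ≤
                  ∑ _j ∈ univ.erase j₀, 1 :=
                Finset.sum_le_sum (fun j _ => clique_ind_sum_le_one (hSstable j) hC)
              have e4 : ∑ _j ∈ (univ : Finset (Fin n')).erase j₀, (1:ℕ) = n' - 1 := by
                rw [Finset.sum_const, smul_eq_mul, mul_one,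
                  Finset.card_erase_of_mem (mem_univ j₀)]
                simp
              omega
            omega
          obtain ⟨u, huC, huS⟩ := hu
          have huv : u ≠ v := fun h => hvC (h ▸ huC)
          have huD : u ∈ D := Finset.mem_erase.mpr ⟨huv, huS⟩
          have hcovu : 1 ≤ covCount S u := one_le_covCount j₀ huS
          have hku : 1 ≤ k' u := by
            by_contra h0
            push_neg at h0
            have e1 := Finset.add_sum_erase _ k' huC
            have e2 : ∑ i ∈ C.erase u, k' i ≤ ∑ i ∈ C.erase u, covCount S i :=
              Finset.sum_le_sum (fun i _ => hScov i)
            have e3 := Finset.add_sum_erase _ (covCount S) huC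
            omega
          have e4 := Finset.add_sum_erase _ k'' huC
          have e5 := Finset.add_sum_erase _ k' huC
          have e6 : ∑ i ∈ C.erase u, k'' i ≤ ∑ i ∈ C.erase u, k' i :=
            Finset.sum_le_sum (fun i _ => hk''le i)
          have e7 : k'' u = k' u - 1 := by simp only [hk'', if_pos huD]
          omega
        · have h5 := le_wcl (G := G) (k := k') hC
          omega
      have hsum'' : ∑ i, (k'' i - 1) ≤ m :=
        le_trans (Finset.sum_le_sum (fun i _ => by have := hk''le i; omega)) hsum
      obtain ⟨n'', hn'', T, hTstable, hTcov⟩ := ih k'' hsum''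
      refine ⟨n'' + 1, by omega, Fin.snoc T (S j₀), ?_, ?_⟩
      · intro j
        refine Fin.lastCases ?_ ?_ j
        · rw [Fin.snoc_last]; exact hSstable j₀
        · intro j'; rw [Fin.snoc_castSucc]; exact hTstable j'
      · intro i
        rw [covCount_snoc]
        have h1 := hTcov i
        by_cases h : i = v
        · have hvD : i ∉ D := by rw [h, hD]; exact Finset.notMem_erase v _
          have e8 : k'' i = k' i := by simp [hk'', hvD]
          have e1 : k' i = k i - 1 := by rw [h]; exact hk'v
          have e2 : 1 < k i := by rw [h]; exact hv
          rw [if_pos (by rw [h]; exact hj₀)]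
          omega
        · have e9 : k' i = k i := hk'ne i h
          by_cases h2 : i ∈ S j₀
          · have hiD : i ∈ D := Finset.mem_erase.mpr ⟨h, h2⟩
            have e8 : k'' i = k' i - 1 := by simp only [hk'', if_pos hiD]
            rw [if_pos h2]
            omega
          · have hiD : i ∉ D := fun hh => h2 (Finset.mem_of_mem_erase hh)
            have e8 : k'' i = k' i := by simp only [hk'', if_neg hiD]; omega
            rw [if_neg h2]
            omega
lemma covCount_eq_card {n : ℕ} (S : Fin n → Finset (Fin d)) (i : Fin d) :
    covCount S i = (univ.filter (fun j => i ∈ S j)).card := by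
  unfold covCount
  rw [Finset.card_filter]

lemma exists_trim {n : ℕ} (S : Fin n → Finset (Fin d)) (k : Fin d → ℕ)
    (h : ∀ i, k i ≤ covCount S i) :
    ∃ S' : Fin n → Finset (Fin d), (∀ j, S' j ⊆ S j) ∧ ∀ i, covCount S' i = k i := by
  classical
  have hch : ∀ i : Fin d, ∃ J ⊆ univ.filter (fun j => i ∈ S j), J.card = k i := by
    intro i
    exact Finset.exists_subset_card_eq (by rw [← covCount_eq_card]; exact h i)
  choose J hJsub hJcard using hch
  refine ⟨fun j => (S j).filter (fun i => j ∈ J i), fun j => Finset.filter_subset _ _, ?_⟩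
  intro i
  rw [← hJcard i, covCount_eq_card]
  congr 1
  ext j
  simp only [mem_filter, mem_univ, true_and]
  constructor
  · rintro ⟨_, hj⟩; exact hj
  · intro hj
    have h2 := hJsub i hj
    simp only [mem_filter, mem_univ, true_and] at h2
    exact ⟨h2, hj⟩

lemma exists_pad {n N : ℕ} (hnN : n ≤ N) (S : Fin n → Finset (Fin d))
    (hS : ∀ j, IsStableSet G (S j)) :
    ∃ S' : Fin N → Finset (Fin d), (∀ j, IsStableSet G (S' j)) ∧
      ∀ i, covCount S' i = covCount S i := by
  obtain ⟨t, rfl⟩ : ∃ t, N = n + t := ⟨N - n, by omega⟩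
  clear hnN
  induction t with
  | zero => exact ⟨S, hS, fun i => rfl⟩
  | succ t iht =>
    obtain ⟨S', hS'st, hS'cov⟩ := iht
    refine ⟨Fin.snoc S' ∅, ?_, ?_⟩
    · intro j
      refine Fin.lastCases ?_ ?_ j
      · rw [Fin.snoc_last]; exact stable_empty
      · intro j'; rw [Fin.snoc_castSucc]; exact hS'st j'
    · intro i
      rw [covCount_snoc, hS'cov]
      simp

lemma covCount_cast {n : ℕ} (S : Fin n → Finset (Fin d)) (i : Fin d) :
    ((covCount S i : ℕ) : ℝ) = ∑ j, indVec (S j) i := by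
  unfold covCount indVec
  push_cast [apply_ite (Nat.cast : ℕ → ℝ)]
  rfl

theorem qstab_mem_stab (hG : IsPerfect G) (x : Fin d → ℝ)
    (hx0 : ∀ i, 0 ≤ x i)
    (hx1 : ∀ C : Finset (Fin d), G.IsClique (C : Set (Fin d)) → ∑ i ∈ C, x i ≤ 1) :
    x ∈ convexHull ℝ {y | ∃ s : Finset (Fin d), IsStableSet G s ∧ y = indVec s} := by
  classical
  set Tset := {y : Fin d → ℝ | ∃ s, IsStableSet G s ∧ y = indVec s} with hTset
  have hTfin : Tset.Finite := Set.Finite.subset (Set.finite_range indVec)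
    (by rintro y ⟨s, _, rfl⟩; exact ⟨s, rfl⟩)
  have hclosed : IsClosed (convexHull ℝ Tset) := (hTfin.isCompact_convexHull ℝ).isClosed
  rw [← hclosed.closure_eq]
  rw [Metric.mem_closure_iff]
  intro ε hε
  obtain ⟨N0, hN0⟩ := exists_nat_gt (1/ε)
  set N := N0 + 1 with hNdef
  have hN : (1:ℝ)/ε < N := lt_of_lt_of_le hN0 (by exact_mod_cast Nat.le_succ N0)
  have hNpos : (0:ℝ) < N := by exact_mod_cast Nat.succ_pos N0
  have hNε : (1:ℝ)/N < ε := by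
    rw [div_lt_iff₀ hNpos]
    rw [div_lt_iff₀ hε] at hN
    linarith
  set k : Fin d → ℕ := fun i => ⌊x i * N⌋₊ with hk
  have hky : ∀ i, (k i : ℝ) ≤ x i * N := fun i => Nat.floor_le (mul_nonneg (hx0 i) (le_of_lt hNpos))
  have hky2 : ∀ i, x i * N < k i + 1 := fun i => Nat.lt_floor_add_one _
  have hwcl : wcl G k ≤ N := by
    apply wcl_le; intro C hC
    have hr : (∑ i ∈ C, k i : ℝ) ≤ N := by
      calc ∑ i ∈ C, (k i : ℝ) ≤ ∑ i ∈ C, x i * N := Finset.sum_le_sum (fun i _ => hky i)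
        _ = (∑ i ∈ C, x i) * N := (Finset.sum_mul _ _ _).symm
        _ ≤ 1 * N := mul_le_mul_of_nonneg_right (hx1 C hC) (le_of_lt hNpos)
        _ = N := one_mul _
    exact_mod_cast hr
  obtain ⟨n, hn, S, hSst, hScov⟩ := weighted_coloring hG k
  obtain ⟨S₁, hS₁st, hS₁cov⟩ := exists_pad (le_trans hn hwcl) S hSst
  obtain ⟨S₂, hS₂sub, hS₂cov⟩ := exists_trim S₁ k (fun i => by rw [hS₁cov]; exact hScov i)
  have hS₂st : ∀ j, IsStableSet G (S₂ j) := fun j => stable_subset (hS₁st j) (hS₂sub j)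
  set y : Fin d → ℝ := fun i => (k i : ℝ) / N with hy
  have hyx : ∀ i, y i ≤ x i := by
    intro i
    rw [hy]
    rw [div_le_iff₀ hNpos]
    exact hky i
  have hxy : ∀ i, x i - y i < 1/N := by
    intro i
    rw [hy, sub_lt_iff_lt_add, ← add_div, lt_div_iff₀ hNpos]
    calc x i * N < k i + 1 := hky2 i
      _ = 1 + k i := by ring
  refine ⟨y, ?_, ?_⟩
  · -- y ∈ convexHull Tset
    have hyc : y = (univ : Finset (Fin N)).centerMass (fun _ => (1:ℝ))
        (fun j => indVec (S₂ j)) := by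
      unfold Finset.centerMass
      funext i
      simp only [Finset.sum_const, card_univ, Fintype.card_fin, nsmul_eq_mul, mul_one,
        one_smul, Pi.smul_apply, Finset.sum_apply, smul_eq_mul]
      rw [← covCount_cast, hS₂cov i, hy]
      simp [div_eq_inv_mul]
    rw [hyc]
    apply Finset.centerMass_mem_convexHull _ (fun _ _ => zero_le_one)
    · rw [Finset.sum_const]
      simp [hNdef]
      positivity
    · intro j _
      exact ⟨S₂ j, hS₂st j, rfl⟩
  · rw [dist_comm, dist_pi_lt_iff hε]
    intro i
    rw [Real.dist_eq, abs_lt]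
    constructor
    · have := hxy i; linarith
    · have := hyx i; linarith
lemma dot_indVec (x : Fin d → ℝ) (C : Finset (Fin d)) : dot x (indVec C) = ∑ i ∈ C, x i := by
  unfold dot indVec
  rw [Finset.sum_congr rfl (fun i _ => by rw [mul_ite, mul_one, mul_zero])]
  rw [Finset.sum_ite_mem, Finset.univ_inter]

lemma dot_indVec_left (w : Fin d → ℝ) (C : Finset (Fin d)) :
    dot (indVec C) w = ∑ i ∈ C, w i := by
  unfold dot indVec
  rw [Finset.sum_congr rfl (fun i _ => by rw [ite_mul, one_mul, zero_mul])]
  rw [Finset.sum_ite_mem, Finset.univ_inter]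

lemma dot_comm (x y : Fin d → ℝ) : dot x y = dot y x := by
  unfold dot
  exact Finset.sum_congr rfl (fun i _ => mul_comm _ _)

lemma dot_indVec_indVec (s C : Finset (Fin d)) :
    dot (indVec s) (indVec C) = ((s ∩ C).card : ℝ) := by
  classical
  rw [dot_indVec]
  unfold indVec
  rw [Finset.sum_ite_mem C s (fun _ => (1:ℝ)), Finset.sum_const]
  simp [Finset.inter_comm]

lemma dot_smul_add (a b : ℝ) (z₁ z₂ w : Fin d → ℝ) :
    dot (a • z₁ + b • z₂) w = a * dot z₁ w + b * dot z₂ w := by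
  unfold dot
  rw [Finset.mul_sum, Finset.mul_sum, ← Finset.sum_add_distrib]
  apply Finset.sum_congr rfl
  intro i _
  simp [Pi.add_apply, Pi.smul_apply, smul_eq_mul]
  ring

lemma convex_dot_le (w : Fin d → ℝ) : Convex ℝ {z : Fin d → ℝ | dot z w ≤ 1} := by
  intro z₁ h₁ z₂ h₂ a b ha hb hab
  simp only [Set.mem_setOf_eq] at *
  rw [dot_smul_add]
  calc a * dot z₁ w + b * dot z₂ w ≤ a * 1 + b * 1 :=
        add_le_add (mul_le_mul_of_nonneg_left h₁ ha) (mul_le_mul_of_nonneg_left h₂ hb)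
    _ = 1 := by rw [mul_one, mul_one, hab]

lemma indVec_extremePoint {F : Set (Fin d → ℝ)}
    (hF : ∀ y ∈ F, ∀ i, y i = 0 ∨ y i = 1) {v : Fin d → ℝ} (hv : v ∈ F) :
    v ∈ Set.extremePoints ℝ (convexHull ℝ F) := by
  have hcube : convexHull ℝ F ⊆ {x : Fin d → ℝ | ∀ i, 0 ≤ x i ∧ x i ≤ 1} := by
    apply convexHull_min
    · intro y hy i
      rcases hF y hy i with h | h <;> rw [h] <;> norm_num
    · intro z₁ h₁ z₂ h₂ a b ha hb hab i
      simp only [Pi.add_apply, Pi.smul_apply, smul_eq_mul]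
      constructor
      · exact add_nonneg (mul_nonneg ha (h₁ i).1) (mul_nonneg hb (h₂ i).1)
      · calc a * z₁ i + b * z₂ i ≤ a * 1 + b * 1 :=
              add_le_add (mul_le_mul_of_nonneg_left (h₁ i).2 ha)
                (mul_le_mul_of_nonneg_left (h₂ i).2 hb)
          _ = 1 := by rw [mul_one, mul_one, hab]
  refine ⟨subset_convexHull ℝ F hv, ?_⟩
  intro x₁ hx₁ x₂ hx₂ hseg
  obtain ⟨a, b, ha, hb, hab, heq⟩ := hseg
  have h₁ := hcube hx₁
  have h₂ := hcube hx₂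
  have key : ∀ i, x₁ i = v i ∧ x₂ i = v i := by
    intro i
    have he : a * x₁ i + b * x₂ i = v i := by
      rw [← heq]; simp
    obtain ⟨h₁₀, h₁₁⟩ := h₁ i
    obtain ⟨h₂₀, h₂₁⟩ := h₂ i
    rcases hF v hv i with h | h <;> rw [h] at he ⊢
    · constructor <;> nlinarith
    · constructor <;> nlinarith
  exact funext fun i => (key i).1

lemma hull_filter {F : Set (Fin d → ℝ)} (w : Fin d → ℝ) {x : Fin d → ℝ}
    (hx : x ∈ convexHull ℝ F) (hle : ∀ z ∈ F, dot z w ≤ 1) (hx1 : 1 ≤ dot x w) :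
    x ∈ convexHull ℝ {z | z ∈ F ∧ dot z w = 1} := by
  classical
  rw [_root_.convexHull_eq] at hx
  obtain ⟨ι, t, wt, z, hw0, hw1, hzF, hcm⟩ := hx
  have hxsum : x = ∑ i ∈ t, wt i • z i := by
    rw [← hcm]
    unfold Finset.centerMass
    rw [hw1]
    simp
  have hdot : dot x w = ∑ i ∈ t, wt i * dot (z i) w := by
    rw [hxsum]
    unfold dot
    simp only [Finset.sum_apply, Pi.smul_apply, smul_eq_mul, Finset.sum_mul]
    rw [Finset.sum_comm]
    apply Finset.sum_congr rfl
    intro i _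
    rw [Finset.mul_sum]
    apply Finset.sum_congr rfl
    intro j _
    ring
  have hkey : ∀ i ∈ t, wt i ≠ 0 → dot (z i) w = 1 := by
    intro i hi hwi
    by_contra hne
    have hlt : dot (z i) w < 1 := lt_of_le_of_ne (hle _ (hzF i hi)) hne
    have hpos : 0 < wt i := lt_of_le_of_ne (hw0 i hi) (Ne.symm hwi)
    have hs : dot x w < 1 := by
      calc dot x w = ∑ i ∈ t, wt i * dot (z i) w := hdot
        _ < ∑ i ∈ t, wt i * 1 := by
            apply Finset.sum_lt_sum
            · intro i' hi'
              rcases eq_or_lt_of_le (hw0 i' hi') with h0 | h0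
              · rw [← h0]; simp
              · exact mul_le_mul_of_nonneg_left (hle _ (hzF i' hi')) (le_of_lt h0)
            · exact ⟨i, hi, mul_lt_mul_of_pos_left hlt hpos⟩
        _ = 1 := by rw [Finset.sum_congr rfl (fun i _ => mul_one (wt i)), hw1]
    linarith
  rw [← hcm, ← Finset.centerMass_filter_ne_zero]
  apply Finset.centerMass_mem_convexHull
  · intro i hi
    exact hw0 i (Finset.mem_of_mem_filter i hi)
  · rw [Finset.sum_filter_ne_zero, hw1]
    exact one_pos
  · intro i hi
    rw [Finset.mem_filter] at hi
    exact ⟨hzF i hi.1, hkey i hi.1 hi.2⟩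

lemma hull_filter_finset {F : Set (Fin d → ℝ)} {x : Fin d → ℝ}
    (hx : x ∈ convexHull ℝ F) (W : Finset (Finset (Fin d)))
    (hle : ∀ z ∈ F, ∀ C ∈ W, dot z (indVec C) ≤ 1)
    (hx1 : ∀ C ∈ W, dot x (indVec C) = 1) :
    x ∈ convexHull ℝ {z | z ∈ F ∧ ∀ C ∈ W, dot z (indVec C) = 1} := by
  classical
  revert hle hx1
  induction W using Finset.induction_on with
  | empty =>
    intro _ _
    simpa using hx
  | insert C W hC ih =>
    intro hle hx1
    have step := ih (fun z hz C' hC' => hle z hz C' (Finset.mem_insert_of_mem hC'))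
      (fun C' hC' => hx1 C' (Finset.mem_insert_of_mem hC'))
    have step2 := hull_filter (indVec C) step
      (fun z hz => hle z hz.1 C (Finset.mem_insert_self C W))
      (le_of_eq (hx1 C (Finset.mem_insert_self C W)).symm)
    refine convexHull_mono ?_ step2
    rintro z ⟨⟨hzF, hzW⟩, hzC⟩
    refine ⟨hzF, fun C' hC' => ?_⟩
    rcases Finset.mem_insert.mp hC' with rfl | h
    · exact hzC
    · exact hzW C' h
lemma mem_clique_hull (hG : IsPerfect G) {y : Fin d → ℝ} (hy0 : ∀ i, 0 ≤ y i)
    (hyS : ∀ s : Finset (Fin d), IsStableSet G s → ∑ i ∈ s, y i ≤ 1) :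
    y ∈ convexHull ℝ {x | ∃ C : Finset (Fin d), G.IsClique (C : Set (Fin d)) ∧ x = indVec C} := by
  classical
  set K := convexHull ℝ {x : Fin d → ℝ | ∃ C : Finset (Fin d),
    G.IsClique (C : Set (Fin d)) ∧ x = indVec C} with hK
  by_contra hyK
  have hKfin : {x : Fin d → ℝ | ∃ C : Finset (Fin d),
      G.IsClique (C : Set (Fin d)) ∧ x = indVec C}.Finite :=
    Set.Finite.subset (Set.finite_range indVec) (by rintro x ⟨C, _, rfl⟩; exact ⟨C, rfl⟩)
  have hclosed : IsClosed K := (hKfin.isCompact_convexHull ℝ).isClosed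
  obtain ⟨f, u, hfu, huy⟩ :=
    geometric_hahn_banach_closed_point (convex_convexHull ℝ _) hclosed hyK
  set c : Fin d → ℝ := fun i => f (fun j => if i = j then 1 else 0) with hc
  have hf : ∀ z : Fin d → ℝ, f z = dot z c := by
    intro z
    conv_lhs => rw [pi_eq_sum_univ z]
    rw [map_sum]
    unfold dot
    apply Finset.sum_congr rfl
    intro i _
    rw [map_smul]
    simp [hc]
  set cp : Fin d → ℝ := fun i => max (c i) 0 with hcp
  have hcpC : ∀ C : Finset (Fin d), G.IsClique (C : Set (Fin d)) → ∑ i ∈ C, cp i < u := by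
    intro C hC
    have hsubm : (C.filter (fun i => 0 ≤ c i)) ⊆ C := Finset.filter_subset _ _
    have hsub : G.IsClique ((C.filter (fun i => 0 ≤ c i) : Finset (Fin d)) : Set (Fin d)) :=
      hC.subset (Finset.coe_subset.mpr hsubm)
    have h2 := hfu (indVec (C.filter (fun i => 0 ≤ c i))) (subset_convexHull ℝ _ ⟨_, hsub, rfl⟩)
    rw [hf, dot_indVec_left] at h2
    have he : ∑ i ∈ C, cp i = ∑ i ∈ C.filter (fun i => 0 ≤ c i), c i := by
      rw [Finset.sum_filter]
      apply Finset.sum_congr rfl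
      intro i _
      by_cases h : 0 ≤ c i
      · rw [if_pos h, hcp]; exact max_eq_left h
      · rw [if_neg h, hcp]; exact max_eq_right (le_of_not_ge h)
    rw [he]
    exact h2
  have hu0 : 0 < u := by
    have h3 := hcpC ∅ (by simp)
    simpa using h3
  have hx0 : ∀ i, 0 ≤ u⁻¹ * cp i :=
    fun i => mul_nonneg (inv_nonneg.mpr (le_of_lt hu0)) (le_max_right _ _)
  have hx1 : ∀ C : Finset (Fin d), G.IsClique (C : Set (Fin d)) →
      ∑ i ∈ C, u⁻¹ * cp i ≤ 1 := by
    intro C hC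
    rw [← Finset.mul_sum]
    rw [inv_mul_le_iff₀ hu0, mul_one]
    exact le_of_lt (hcpC C hC)
  have hmem := qstab_mem_stab hG (fun i => u⁻¹ * cp i) hx0 hx1
  have hdy : dot (fun i => u⁻¹ * cp i) y ≤ 1 := by
    have hsub2 : {z : Fin d → ℝ | ∃ s, IsStableSet G s ∧ z = indVec s} ⊆
        {z | dot z y ≤ 1} := by
      rintro z ⟨s, hs, rfl⟩
      rw [Set.mem_setOf_eq, dot_indVec_left]
      exact hyS s hs
    exact convexHull_min hsub2 (convex_dot_le y) hmem
  have hd1 : dot (fun i => u⁻¹ * cp i) y = u⁻¹ * dot cp y := by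
    unfold dot
    rw [Finset.mul_sum]
    apply Finset.sum_congr rfl
    intro i _
    ring
  have hd2 : dot cp y ≤ u := by
    rw [hd1] at hdy
    rw [inv_mul_le_iff₀ hu0, mul_one] at hdy
    exact hdy
  have hd3 : dot y c ≤ dot y cp := by
    unfold dot
    apply Finset.sum_le_sum
    intro i _
    exact mul_le_mul_of_nonneg_left (le_max_left _ _) (hy0 i)
  rw [hf] at huy
  rw [dot_comm cp y] at hd2
  linarith

end Aux

/-- for a perfect CIS graph, the convex hulls of indicators of
maximal stable sets and of maximal cliques form a Gale-dual pair. -/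
theorem stmt18 {d : ℕ} (G : SimpleGraph (Fin d)) (hG : IsPerfect G)
    (hCIS : ∀ C S : Finset (Fin d), IsMaxClique G C → IsMaxStable G S →
      (C ∩ S).Nonempty) :
    (convexHull ℝ {x | ∃ S : Finset (Fin d), IsMaxStable G S ∧ x = indVec S} =
      {x | x ∈ nonnegOrthant d ∧
        ∀ y ∈ Set.extremePoints ℝ
          (convexHull ℝ {x | ∃ C : Finset (Fin d), IsMaxClique G C ∧ x = indVec C}),
          dot x y = 1}) ∧
    (convexHull ℝ {x | ∃ C : Finset (Fin d), IsMaxClique G C ∧ x = indVec C} =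
      {x | x ∈ nonnegOrthant d ∧
        ∀ y ∈ Set.extremePoints ℝ
          (convexHull ℝ {x | ∃ S : Finset (Fin d), IsMaxStable G S ∧ x = indVec S}),
          dot x y = 1}) := by
  classical
  have hQ01 : ∀ x ∈ {x : Fin d → ℝ | ∃ C, IsMaxClique G C ∧ x = indVec C},
      ∀ i, x i = 0 ∨ x i = 1 := by
    rintro x ⟨C, _, rfl⟩ i
    unfold indVec
    by_cases h : i ∈ C <;> simp [h]
  have hP01 : ∀ x ∈ {x : Fin d → ℝ | ∃ S, IsMaxStable G S ∧ x = indVec S},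
      ∀ i, x i = 0 ∨ x i = 1 := by
    rintro x ⟨S, _, rfl⟩ i
    unfold indVec
    by_cases h : i ∈ S <;> simp [h]
  have cardCS : ∀ C S : Finset (Fin d), IsMaxClique G C → IsMaxStable G S →
      (C ∩ S).card = 1 := by
    intro C S hC hS
    have h1 : 1 ≤ (C ∩ S).card := Finset.card_pos.mpr (hCIS C S hC hS)
    have h2 : (S ∩ C).card ≤ 1 := stable_inter_clique_card hS.1 hC.1
    rw [Finset.inter_comm] at h2
    omega
  have hind0 : ∀ s : Finset (Fin d), indVec s ∈ nonnegOrthant d := by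
    intro s i
    unfold indVec
    by_cases h : i ∈ s <;> simp [h]
  have horthC : ∀ (a b : ℝ) (x₁ x₂ : Fin d → ℝ), 0 ≤ a → 0 ≤ b →
      x₁ ∈ nonnegOrthant d → x₂ ∈ nonnegOrthant d →
      a • x₁ + b • x₂ ∈ nonnegOrthant d := by
    intro a b x₁ x₂ ha hb h₁ h₂ i
    simp only [Pi.add_apply, Pi.smul_apply, smul_eq_mul]
    exact add_nonneg (mul_nonneg ha (h₁ i)) (mul_nonneg hb (h₂ i))
  constructor
  · -- first equality
    apply Set.Subset.antisymm
    · apply convexHull_min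
      · rintro x ⟨S, hS, rfl⟩
        refine ⟨hind0 S, ?_⟩
        intro y hy
        obtain ⟨C, hC, rfl⟩ := extremePoints_convexHull_subset hy
        rw [dot_indVec_indVec, Finset.inter_comm S C, cardCS C S hC hS]
        norm_num
      · intro x₁ h₁ x₂ h₂ a b ha hb hab
        refine ⟨horthC a b x₁ x₂ ha hb h₁.1 h₂.1, ?_⟩
        intro y hy
        rw [dot_smul_add, h₁.2 y hy, h₂.2 y hy, mul_one, mul_one, hab]
    · rintro x ⟨hx0, hxE⟩
      have hx0' : ∀ i, 0 ≤ x i := hx0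
      have hxC : ∀ C, IsMaxClique G C → dot x (indVec C) = 1 := fun C hC =>
        hxE (indVec C) (indVec_extremePoint hQ01 ⟨C, hC, rfl⟩)
      have hq : ∀ C : Finset (Fin d), G.IsClique (C : Set (Fin d)) → ∑ i ∈ C, x i ≤ 1 := by
        intro C hC
        obtain ⟨C', hC', hsub⟩ := exists_maxClique_superset hC
        calc ∑ i ∈ C, x i ≤ ∑ i ∈ C', x i :=
              Finset.sum_le_sum_of_subset_of_nonneg hsub (fun i _ _ => hx0' i)
          _ = 1 := by rw [← dot_indVec]; exact hxC C' hC'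
      have hmem := qstab_mem_stab hG x hx0' hq
      set W : Finset (Finset (Fin d)) := univ.filter (fun C => IsMaxClique G C) with hW
      have hstep := hull_filter_finset hmem W
        (by rintro z ⟨s, hs, rfl⟩ C hCW
            simp only [hW, mem_filter, mem_univ, true_and] at hCW
            rw [dot_indVec_indVec]
            exact_mod_cast stable_inter_clique_card hs hCW.1)
        (by intro C hCW
            simp only [hW, mem_filter, mem_univ, true_and] at hCW
            exact hxC C hCW)
      refine convexHull_mono ?_ hstep
      rintro z ⟨⟨s, hs, rfl⟩, hz⟩
      refine ⟨s, ?_, rfl⟩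
      apply maxStable_of_meets hs
      intro C hC
      have h3 := hz C (by simp [hW, hC])
      rw [dot_indVec_indVec] at h3
      have h4 : (s ∩ C).card = 1 := by exact_mod_cast h3
      exact Finset.card_pos.mp (by omega)
  · -- second equality
    apply Set.Subset.antisymm
    · apply convexHull_min
      · rintro x ⟨C, hC, rfl⟩
        refine ⟨hind0 C, ?_⟩
        intro y hy
        obtain ⟨S, hS, rfl⟩ := extremePoints_convexHull_subset hy
        rw [dot_indVec_indVec, cardCS C S hC hS]
        norm_num
      · intro x₁ h₁ x₂ h₂ a b ha hb hab
        refine ⟨horthC a b x₁ x₂ ha hb h₁.1 h₂.1, ?_⟩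
        intro y hy
        rw [dot_smul_add, h₁.2 y hy, h₂.2 y hy, mul_one, mul_one, hab]
    · rintro x ⟨hx0, hxE⟩
      have hx0' : ∀ i, 0 ≤ x i := hx0
      have hxS : ∀ S, IsMaxStable G S → dot x (indVec S) = 1 := fun S hS =>
        hxE (indVec S) (indVec_extremePoint hP01 ⟨S, hS, rfl⟩)
      have hq : ∀ s : Finset (Fin d), IsStableSet G s → ∑ i ∈ s, x i ≤ 1 := by
        intro s hs
        obtain ⟨s', hs', hsub⟩ := exists_maxStable_superset hs
        calc ∑ i ∈ s, x i ≤ ∑ i ∈ s', x i :=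
              Finset.sum_le_sum_of_subset_of_nonneg hsub (fun i _ _ => hx0' i)
          _ = 1 := by rw [← dot_indVec]; exact hxS s' hs'
      have hmem := mem_clique_hull hG hx0' hq
      set W : Finset (Finset (Fin d)) := univ.filter (fun S => IsMaxStable G S) with hW
      have hstep := hull_filter_finset hmem W
        (by rintro z ⟨C, hC, rfl⟩ S hSW
            simp only [hW, mem_filter, mem_univ, true_and] at hSW
            rw [dot_indVec_indVec, Finset.inter_comm]
            exact_mod_cast stable_inter_clique_card hSW.1 hC)
        (by intro S hSW
            simp only [hW, mem_filter, mem_univ, true_and] at hSW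
            exact hxS S hSW)
      refine convexHull_mono ?_ hstep
      rintro z ⟨⟨C, hC, rfl⟩, hz⟩
      refine ⟨C, ?_, rfl⟩
      apply maxClique_of_meets hC
      intro S hS
      have h3 := hz S (by simp [hW, hS])
      rw [dot_indVec_indVec] at h3
      have h4 : (C ∩ S).card = 1 := by exact_mod_cast h3
      exact Finset.card_pos.mp (by omega)
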